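/- Let A be a central subset of ℕ, let k ∈ ℕ, and for each i ∈ {1,…,k} let ⟨y_{i,n}⟩_{n=1}^∞ be a sequence in ℤ. Then there exist a sequence ⟨a_n⟩_{n=1}^∞ in ℕ and a sequence ⟨H_n⟩_{n=1}^∞ in 𝒫_f(ℕ) such that: (1) max H_n < min H_{n+1} for each n ∈ ℕ; and (2) for each i ∈ {1,…,k} and each F ∈ 𝒫_f(ℕ), Σ_{n∈F} (a_n + Σ_{t∈H_n} y_{i,t}) ∈ A. -/
import Mathlib


/- The addition on `Ultrafilter ℕ+` (Stone–Čech extension of `+` on `ℕ = {1,2,…}`):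
`A ∈ p + q ↔ {x | {y | x + y ∈ A} ∈ q} ∈ p`. -/
attribute [local instance] Ultrafilter.add Ultrafilter.addSemigroup

open Filter Set

theorem mem_uadd {M} [AddSemigroup M] (U V : Ultrafilter M) (s : Set M) :
    s ∈ U + V ↔ {m | {m' | m + m' ∈ s} ∈ V} ∈ U := Iff.rfl

theorem upure_add_pure {M} [AddSemigroup M] (a b : M) :
    (pure a : Ultrafilter M) + pure b = pure (a + b) := rfl

theorem upure_add {M} [AddSemigroup M] (a : M) (V : Ultrafilter M) :
    (pure a : Ultrafilter M) + V = V.map (a + ·) := rfl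

theorem continuous_umap {α β} (f : α → β) : Continuous (Ultrafilter.map f) :=
  ultrafilterBasis_is_basis.continuous_iff.2 <| Set.forall_mem_range.mpr fun s ↦
    ultrafilter_isOpen_basic (f ⁻¹' s)

theorem umap_add (u v : Ultrafilter ℕ+) :
    Ultrafilter.map (fun m : ℕ+ => (m : ℤ)) (u + v)
      = Ultrafilter.map (fun m : ℕ+ => (m : ℤ)) u + Ultrafilter.map (fun m : ℕ+ => (m : ℤ)) v := by
  ext s
  simp only [mem_uadd, Ultrafilter.mem_map]
  have : {m : ℕ+ | {m' | m + m' ∈ (fun m : ℕ+ => (m:ℤ)) ⁻¹' s} ∈ v}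
      = ((fun m : ℕ+ => (m:ℤ)) ⁻¹' {x | (fun m : ℕ+ => (m:ℤ)) ⁻¹' {x' | x + x' ∈ s} ∈ v}) := by
    ext m
    simp only [Set.mem_preimage, Set.mem_setOf_eq]
    constructor <;> intro h <;> · apply Filter.mem_of_superset h
                                  intro m' hm'
                                  simp only [Set.mem_preimage, Set.mem_setOf_eq] at hm' ⊢
                                  push_cast at hm' ⊢
                                  convert hm' using 2 <;> push_cast <;> ring
  rw [this]


variable {K : ℕ}

theorem box_isOpen (B : Fin K → Set ℤ) :
    IsOpen {v : Fin K → Ultrafilter ℤ | ∀ i, B i ∈ v i} := by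
  have : {v : Fin K → Ultrafilter ℤ | ∀ i, B i ∈ v i}
      = ⋂ i, (fun v : Fin K → Ultrafilter ℤ => v i) ⁻¹' {u | B i ∈ u} := by
    ext v; simp
  rw [this]
  exact isOpen_iInter_of_finite fun i =>
    (ultrafilter_isOpen_basic (B i)).preimage (continuous_apply i)

theorem mem_closure_box {S : Set (Fin K → Ultrafilter ℤ)} {u : Fin K → Ultrafilter ℤ} :
    u ∈ closure S ↔
      ∀ B : Fin K → Set ℤ, (∀ i, B i ∈ u i) → ∃ v ∈ S, ∀ i, B i ∈ v i := by
  constructor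
  · intro h B hB
    obtain ⟨v, hv1, hv2⟩ := mem_closure_iff.1 h _ (box_isOpen B) hB
    exact ⟨v, hv2, hv1⟩
  · intro h
    rw [mem_closure_iff]
    intro o ho hu
    obtain ⟨I, w, hw, hsub⟩ := isOpen_pi_iff.1 ho u hu
    have hsel : ∀ i ∈ I, ∃ s : Set ℤ, s ∈ u i ∧ {x : Ultrafilter ℤ | s ∈ x} ⊆ w i := by
      intro i hi
      obtain ⟨b, hb, hub, hbsub⟩ :=
        ultrafilterBasis_is_basis.isOpen_iff.1 (hw i hi).1 (u i) (hw i hi).2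
      obtain ⟨s, rfl⟩ := hb
      exact ⟨s, hub, hbsub⟩
    have hsel' : ∀ i, ∃ s : Set ℤ, s ∈ u i ∧ (i ∈ I → {x : Ultrafilter ℤ | s ∈ x} ⊆ w i) := by
      intro i
      by_cases h : i ∈ I
      · obtain ⟨s, h1, h2⟩ := hsel i h
        exact ⟨s, h1, fun _ => h2⟩
      · exact ⟨Set.univ, Filter.univ_mem, fun h' => absurd h' h⟩
    obtain ⟨v, hvS, hvB⟩ := h (fun i => (hsel' i).choose) (fun i => (hsel' i).choose_spec.1)
    refine ⟨v, ?_, hvS⟩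
    apply hsub
    intro i hi
    exact (hsel' i).choose_spec.2 hi (hvB i)

section CST
variable (k : ℕ) (y : ℕ → ℕ → ℤ)

/-- the sequences, with a zero sequence in coordinate 0 -/
def zz : Fin (k+1) → ℕ → ℤ := fun i t => if (i : ℕ) = 0 then 0 else y i t

/-- principal points of the product space -/
def ppt (a : ℤ) (H : Finset ℕ) : Fin (k+1) → Ultrafilter ℤ :=
  fun i => pure (a + ∑ t ∈ H, zz k y i t)

def Gen (b : Bool) (n : ℕ) : Set (Fin (k+1) → Ultrafilter ℤ) :=
  {w | ∃ a H, (b = true → Finset.Nonempty H) ∧ (∀ t ∈ H, n < t) ∧ w = ppt k y a H}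

theorem ppt_add_ppt {a b : ℤ} {H G : Finset ℕ} (hdis : Disjoint H G) :
    ppt k y a H + ppt k y b G = ppt k y (a + b) (H ∪ G) := by
  funext i
  show (pure _ : Ultrafilter ℤ) + pure _ = pure _
  rw [upure_add_pure]
  congr 1
  rw [Finset.sum_union hdis]
  ring

theorem add_mem_closure_gen (b₁ b₂ : Bool) (n : ℕ) {u v : Fin (k+1) → Ultrafilter ℤ}
    (hu : u ∈ closure (Gen k y b₁ n)) (hv : ∀ m, v ∈ closure (Gen k y b₂ m)) :
    u + v ∈ closure (Gen k y (b₁ || b₂) n) := by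
  rw [mem_closure_iff]
  intro o ho hmem
  have hρ : Continuous (fun w : Fin (k+1) → Ultrafilter ℤ => w + v) := by
    apply continuous_pi
    intro i
    exact (Ultrafilter.continuous_add_left (v i)).comp (continuous_apply i)
  have hu' : u ∈ (fun w => w + v) ⁻¹' o := hmem
  obtain ⟨w₁, hw₁o, a, H, hHne, hHgt, rfl⟩ :=
    mem_closure_iff.1 hu _ (ho.preimage hρ) hu'
  have hlam : Continuous (fun w : Fin (k+1) → Ultrafilter ℤ => ppt k y a H + w) := by
    apply continuous_pi
    intro i
    have : (fun w : Fin (k+1) → Ultrafilter ℤ => (ppt k y a H + w) i)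
        = fun w => Ultrafilter.map ((a + ∑ t ∈ H, zz k y i t) + ·) (w i) := by
      funext w
      show (pure _ : Ultrafilter ℤ) + w i = _
      rw [upure_add]
    rw [this]
    exact (continuous_umap _).comp (continuous_apply i)
  set m := max n (H.sup id) with hm
  have hv' : v ∈ (fun w => ppt k y a H + w) ⁻¹' o := hw₁o
  obtain ⟨w₂, hw₂o, c, G, hGne, hGgt, rfl⟩ :=
    mem_closure_iff.1 (hv m) _ (ho.preimage hlam) hv'
  have hdis : Disjoint H G := by
    rw [Finset.disjoint_left]
    intro t htH htG
    exact absurd (hGgt t htG) (by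
      have : t ≤ m := le_trans (Finset.le_sup (f := id) htH) (le_max_right _ _)
      omega)
  refine ⟨ppt k y (a + c) (H ∪ G), ?_, a + c, H ∪ G, ?_, ?_, rfl⟩
  · rw [← ppt_add_ppt k y hdis]; exact hw₂o
  · intro hb
    rcases Bool.or_eq_true_iff.1 hb with h | h
    · obtain ⟨t, ht⟩ := hHne h
      exact ⟨t, Finset.mem_union_left _ ht⟩
    · obtain ⟨t, ht⟩ := hGne h
      exact ⟨t, Finset.mem_union_right _ ht⟩
  · intro t ht
    rcases Finset.mem_union.1 ht with h | h
    · exact hHgt t h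
    · exact lt_of_le_of_lt (le_max_left _ _) (hGgt t h)

def EE : Set (Fin (k+1) → Ultrafilter ℤ) := {w | ∀ n, w ∈ closure (Gen k y false n)}
def II : Set (Fin (k+1) → Ultrafilter ℤ) := {w | ∀ n, w ∈ closure (Gen k y true n)}

theorem II_subset_EE : II k y ⊆ EE k y := by
  intro w hw n
  refine closure_mono ?_ (hw n)
  rintro x ⟨a, H, _, hgt, rfl⟩
  exact ⟨a, H, by simp, hgt, rfl⟩

theorem EE_add {u v} (hu : u ∈ EE k y) (hv : v ∈ EE k y) : u + v ∈ EE k y :=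
  fun n => add_mem_closure_gen k y false false n (hu n) hv

theorem EE_add_II {u v} (hu : u ∈ EE k y) (hv : v ∈ II k y) : u + v ∈ II k y :=
  fun n => add_mem_closure_gen k y false true n (hu n) hv

theorem II_add_EE {u v} (hu : u ∈ II k y) (hv : v ∈ EE k y) : u + v ∈ II k y :=
  fun n => add_mem_closure_gen k y true false n (hu n) hv

theorem EE_closed : IsClosed (EE k y) := by
  have : EE k y = ⋂ n, closure (Gen k y false n) := by
    ext w; simp [EE, Set.mem_iInter]
  rw [this]
  exact isClosed_iInter fun n => isClosed_closure

theorem diag_mem_EE (P : Ultrafilter ℤ) : (fun _ => P) ∈ EE k y := by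
  intro n
  rw [mem_closure_box]
  intro B hB
  have hmem : (⋂ i, B i) ∈ P := (Filter.iInter_mem).2 hB
  obtain ⟨a, ha⟩ := Ultrafilter.nonempty_of_mem hmem
  refine ⟨ppt k y a ∅, ⟨a, ∅, by simp, by simp, rfl⟩, ?_⟩
  intro i
  show a + ∑ t ∈ (∅ : Finset ℕ), zz k y i t ∈ B i
  simpa using Set.mem_iInter.1 ha i

theorem II_nonempty : (II k y).Nonempty := by
  have h := IsCompact.nonempty_iInter_of_sequence_nonempty_isCompact_isClosed
    (fun n => closure (Gen k y true n))
    (fun n => closure_mono (by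
      rintro x ⟨a, H, hne, hgt, rfl⟩
      exact ⟨a, H, hne, fun t ht => Nat.lt_of_succ_lt (hgt t ht), rfl⟩))
    (fun n => ⟨ppt k y 0 {n+1}, subset_closure ⟨0, {n+1}, fun _ => ⟨n+1, by simp⟩,
      by simp, rfl⟩⟩)
    (isClosed_closure.isCompact)
    (fun n => isClosed_closure)
  obtain ⟨w, hw⟩ := h
  exact ⟨w, fun n => Set.mem_iInter.1 hw n⟩

theorem continuous_radd (v : Fin (k+1) → Ultrafilter ℤ) :
    Continuous (· + v : (Fin (k+1) → Ultrafilter ℤ) → (Fin (k+1) → Ultrafilter ℤ)) := by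
  apply continuous_pi
  intro i
  exact (Ultrafilter.continuous_add_left (v i)).comp (continuous_apply i)

theorem pbar_mem_II (P : Ultrafilter ℤ) (hidem : P + P = P)
    (hmin : ∀ q : Ultrafilter ℤ, ∃ r, r + q + P = P) :
    (fun _ => P : Fin (k+1) → Ultrafilter ℤ) ∈ II k y := by
  classical
  set pb : Fin (k+1) → Ultrafilter ℤ := fun _ => P with hpb
  have hpb_idem : pb + pb = pb := funext fun _ => hidem
  have hYmin : ∀ q : Fin (k+1) → Ultrafilter ℤ, ∃ r, r + q + pb = pb := by
    intro q
    refine ⟨fun i => (hmin (q i)).choose, funext fun i => ?_⟩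
    exact (hmin (q i)).choose_spec
  have hE : pb ∈ EE k y := diag_mem_EE k y P
  set L : Set (Fin (k+1) → Ultrafilter ℤ) := {m | ∃ s, s + pb = m} with hLdef
  have hL1 : ∀ m ∈ L, m + pb = m := by
    rintro m ⟨s, rfl⟩
    rw [add_assoc, hpb_idem]
  have hL2 : ∀ m ∈ L, ∃ r, r + m = pb := by
    intro m hm
    obtain ⟨r, hr⟩ := hYmin m
    refine ⟨r, ?_⟩
    rw [add_assoc, hL1 m hm] at hr
    exact hr
  have hLleft : ∀ (x : Fin (k+1) → Ultrafilter ℤ), ∀ m ∈ L, x + m ∈ L := by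
    rintro x m ⟨s, rfl⟩
    exact ⟨x + s, by rw [add_assoc]⟩
  have hLcompact : IsCompact L := by
    have : L = (· + pb) '' Set.univ := by
      ext m; simp [hLdef, Set.image, eq_comm]
    rw [this]
    exact isCompact_univ.image (continuous_radd k pb)
  obtain ⟨q0, hq0⟩ := II_nonempty k y
  set v := q0 + pb with hv
  have hvII : v ∈ II k y := II_add_EE k y hq0 hE
  have hvL : v ∈ L := ⟨q0, rfl⟩
  set ELset := EE k y ∩ L with hELdef
  have hELcompact : IsCompact ELset :=
    ((EE_closed k y).inter hLcompact.isClosed).isCompact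
  set S0 : Set (Fin (k+1) → Ultrafilter ℤ) := (· + v) '' ELset with hS0def
  have hS0ne : S0.Nonempty := ⟨pb + v, ⟨pb, ⟨hE, ⟨pb, hpb_idem⟩⟩, rfl⟩⟩
  have hS0compact : IsCompact S0 := hELcompact.image (continuous_radd k v)
  have hS0add : ∀ x ∈ S0, ∀ z ∈ S0, x + z ∈ S0 := by
    rintro _ ⟨x₀, hx₀, rfl⟩ _ ⟨z₀, hz₀, rfl⟩
    refine ⟨x₀ + v + z₀, ⟨?_, ?_⟩, by simp only [add_assoc]⟩
    · exact EE_add k y (EE_add k y hx₀.1 (II_subset_EE k y hvII)) hz₀.1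
    · exact hLleft _ _ hz₀.2
  obtain ⟨w, hwS0, hww⟩ := exists_idempotent_in_compact_add_subsemigroup
    (fun r => continuous_radd k r) S0 hS0ne hS0compact hS0add
  have hwII : w ∈ II k y := by
    obtain ⟨x₀, hx₀, rfl⟩ := hwS0
    exact EE_add_II k y hx₀.1 hvII
  have hwL : w ∈ L := by
    obtain ⟨x₀, hx₀, rfl⟩ := hwS0
    exact hLleft _ _ hvL
  obtain ⟨r, hr⟩ := hL2 w hwL
  have hpbw : pb + w = pb := by
    rw [← hr, add_assoc, hww]
  rw [← hpbw]
  exact EE_add_II k y hE hwII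

theorem extraction (P : Ultrafilter ℤ) (hidem : P + P = P)
    (hmin : ∀ q : Ultrafilter ℤ, ∃ r, r + q + P = P) (n : ℕ) (B : Set ℤ) (hB : B ∈ P) :
    ∃ (a : ℤ) (H : Finset ℕ), H.Nonempty ∧ (∀ t ∈ H, n < t) ∧
      ∀ i : Fin (k+1), a + ∑ t ∈ H, zz k y i t ∈ B := by
  have h := pbar_mem_II k y P hidem hmin n
  rw [mem_closure_box] at h
  obtain ⟨v, ⟨a, H, hne, hgt, rfl⟩, hv⟩ := h (fun _ => B) (fun _ => hB)
  exact ⟨a, H, hne rfl, hgt, fun i => hv i⟩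

end CST

section PNatPush

theorem pnat_coe_int_injective : Function.Injective (fun m : ℕ+ => (m : ℤ)) := by
  intro a b h
  simp only at h
  exact_mod_cast PNat.coe_injective (by exact_mod_cast h)

theorem cofinal_mem (p : Ultrafilter ℕ+) (hp : p = p + p) (x : ℤ) :
    {m : ℕ+ | x ≤ (m : ℤ)} ∈ p := by
  have hnp : ∀ a : ℕ+, p ≠ pure a := by
    intro a ha
    rw [ha] at hp
    have : (pure a : Ultrafilter ℕ+) = pure (a + a) := by
      rw [hp]; rfl
    have h2 := Ultrafilter.pure_injective this
    have h3 := congrArg (PNat.val) h2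
    rw [PNat.add_coe] at h3
    have h4 : 0 < a.val := a.pos
    omega
  have hle : (p : Filter ℕ+) ≤ Filter.cofinite := by
    rcases Ultrafilter.le_cofinite_or_eq_pure p with h | ⟨a, ha⟩
    · exact h
    · exact absurd ha (hnp a)
  apply hle
  rw [Filter.mem_cofinite]
  have : {m : ℕ+ | x ≤ (m : ℤ)}ᶜ ⊆ (fun m : ℕ+ => (m : ℤ)) ⁻¹' (Set.Ico 1 x) := by
    intro m hm
    simp only [Set.mem_compl_iff, Set.mem_setOf_eq, not_le] at hm
    refine ⟨?_, hm⟩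
    show (1 : ℤ) ≤ ((m : ℕ) : ℤ)
    exact_mod_cast m.one_le
  exact Set.Finite.subset (Set.Finite.preimage (Set.injOn_of_injective pnat_coe_int_injective)
    (Set.finite_Ico 1 x)) this

theorem range_mem_add (p : Ultrafilter ℕ+) (hp : p = p + p) (q : Ultrafilter ℤ) :
    Set.range (fun m : ℕ+ => (m : ℤ)) ∈ q + Ultrafilter.map (fun m : ℕ+ => (m : ℤ)) p := by
  rw [mem_uadd]
  apply Filter.univ_mem'
  intro x
  show {y | x + y ∈ Set.range _} ∈ Ultrafilter.map _ p
  rw [Ultrafilter.mem_map]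
  apply Filter.mem_of_superset (cofinal_mem p hp (1 - x))
  intro m hm
  simp only [Set.mem_setOf_eq] at hm ⊢
  refine ⟨⟨(x + (m : ℤ)).toNat, by omega⟩, ?_⟩
  show ((((x + (m:ℤ)).toNat : ℕ) : ℤ)) = x + (m : ℤ)
  omega

theorem K_transfer (p : Ultrafilter ℕ+) (hp : p = p + p)
    (hpmin : ∀ q : Ultrafilter ℕ+, ∃ r, r + q + p = p) (q : Ultrafilter ℤ) :
    ∃ r, r + q + Ultrafilter.map (fun m : ℕ+ => (m : ℤ)) p
      = Ultrafilter.map (fun m : ℕ+ => (m : ℤ)) p := by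
  set P := Ultrafilter.map (fun m : ℕ+ => (m : ℤ)) p with hP
  have hidem : P + P = P := by rw [hP, ← umap_add, ← hp]
  have hlarge := range_mem_add p hp q
  set q' := (q + P).comap pnat_coe_int_injective hlarge with hq'
  have hmapq' : Ultrafilter.map (fun m : ℕ+ => (m : ℤ)) q' = q + P := by
    apply Ultrafilter.coe_injective
    show Filter.map _ (Filter.comap _ _) = _
    exact Filter.map_comap_of_mem hlarge
  obtain ⟨r', hr'⟩ := hpmin q'
  have hpush : Ultrafilter.map (fun m : ℕ+ => (m : ℤ)) r' + (q + P) + P = P := by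
    have h0 : Ultrafilter.map (fun m : ℕ+ => (m : ℤ)) (r' + q' + p)
        = Ultrafilter.map (fun m : ℕ+ => (m : ℤ)) p := by rw [hr']
    rw [umap_add, umap_add, hmapq'] at h0
    rw [← hP] at h0
    exact h0
  refine ⟨Ultrafilter.map (fun m : ℕ+ => (m : ℤ)) r', ?_⟩
  calc Ultrafilter.map (fun m : ℕ+ => (m : ℤ)) r' + q + P
      = Ultrafilter.map (fun m : ℕ+ => (m : ℤ)) r' + q + (P + P) := by rw [hidem]
    _ = Ultrafilter.map (fun m : ℕ+ => (m : ℤ)) r' + (q + P) + P := by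
        rw [add_assoc, add_assoc, add_assoc]
    _ = P := hpush

end PNatPush

section Star
variable (P : Ultrafilter ℤ)

def ustar (B : Set ℤ) : Set ℤ := {x | x ∈ B ∧ {z | x + z ∈ B} ∈ P}

theorem ustar_subset (B : Set ℤ) : ustar P B ⊆ B := fun _ hx => hx.1

theorem ustar_mem (hidem : P + P = P) {B : Set ℤ} (hB : B ∈ P) : ustar P B ∈ P := by
  have h2 : {x | {z | x + z ∈ B} ∈ P} ∈ P := (mem_uadd P P B).1 (by rw [hidem]; exact hB)
  exact Filter.inter_mem hB h2

theorem ustar_step (hidem : P + P = P) {B : Set ℤ} {x : ℤ} (hx : x ∈ ustar P B) :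
    {z | x + z ∈ ustar P B} ∈ P := by
  have hB' : {z | x + z ∈ B} ∈ P := hx.2
  apply Filter.mem_of_superset (ustar_mem P hidem hB')
  rintro z ⟨hz1, hz2⟩
  refine ⟨hz1, ?_⟩
  apply Filter.mem_of_superset hz2
  intro w hw
  simp only [Set.mem_setOf_eq, add_assoc] at hw ⊢
  exact hw

end Star

section Construct
open scoped Classical
variable (k : ℕ) (y : ℕ → ℕ → ℤ)

def vval (pc : ℕ → ℤ × Finset ℕ) (i : Fin (k+1)) (m : ℕ) : ℤ :=
  (pc m).1 + ∑ t ∈ (pc m).2, zz k y i t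

def ssum (pc : ℕ → ℤ × Finset ℕ) (i : Fin (k+1)) (F : Finset ℕ) : ℤ :=
  ∑ m ∈ F, vval k y pc i m

def TT (SA : Set ℤ) (pc : ℕ → ℤ × Finset ℕ) (F : Finset ℕ) (i : Fin (k+1)) : Set ℤ :=
  if ssum k y pc i F ∈ SA then {x | ssum k y pc i F + x ∈ SA} else Set.univ

def DD (SA : Set ℤ) (n : ℕ) (pc : ℕ → ℤ × Finset ℕ) : Set ℤ :=
  SA ∩ ⋂ F ∈ (Finset.range n).powerset, ⋂ i, TT k y SA pc F i

def bnd (n : ℕ) (pc : ℕ → ℤ × Finset ℕ) : ℕ :=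
  (Finset.range n).sup fun m => (pc m).2.sup id

theorem bnd_congr (n : ℕ) {pc pc' : ℕ → ℤ × Finset ℕ} (h : ∀ m < n, pc m = pc' m) :
    bnd n pc = bnd n pc' := by
  unfold bnd
  apply Finset.sup_congr rfl
  intro m hm
  rw [h m (Finset.mem_range.1 hm)]

theorem ssum_congr {pc pc' : ℕ → ℤ × Finset ℕ} (i : Fin (k+1)) {F : Finset ℕ}
    (h : ∀ m ∈ F, pc m = pc' m) : ssum k y pc i F = ssum k y pc' i F := by
  unfold ssum vval
  exact Finset.sum_congr rfl fun m hm => by rw [h m hm]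

theorem DD_congr (SA : Set ℤ) (n : ℕ) {pc pc' : ℕ → ℤ × Finset ℕ}
    (h : ∀ m < n, pc m = pc' m) : DD k y SA n pc = DD k y SA n pc' := by
  unfold DD
  congr 1
  apply Set.iInter₂_congr
  intro F hF
  apply Set.iInter_congr
  intro i
  have hs : ssum k y pc i F = ssum k y pc' i F :=
    ssum_congr k y i fun m hm =>
      h m (Finset.mem_range.1 (Finset.mem_powerset.1 hF hm))
  unfold TT
  rw [hs]

theorem DD_mem (P : Ultrafilter ℤ) (hidem : P + P = P) {B : Set ℤ} (hB : B ∈ P)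
    (n : ℕ) (pc : ℕ → ℤ × Finset ℕ) : DD k y (ustar P B) n pc ∈ P := by
  refine Filter.inter_mem (ustar_mem P hidem hB) ?_
  rw [Filter.biInter_finset_mem]
  intro F _
  rw [Filter.iInter_mem]
  intro i
  unfold TT
  by_cases h : ssum k y pc i F ∈ ustar P B
  · rw [if_pos h]; exact ustar_step P hidem h
  · rw [if_neg h]; exact Filter.univ_mem

theorem hex_all (P : Ultrafilter ℤ) (hidem : P + P = P)
    (hmin : ∀ q : Ultrafilter ℤ, ∃ r, r + q + P = P) {B : Set ℤ} (hB : B ∈ P)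
    (n : ℕ) (pc : ℕ → ℤ × Finset ℕ) :
    ∃ aH : ℤ × Finset ℕ, aH.2.Nonempty ∧ (∀ t ∈ aH.2, bnd n pc < t) ∧
      ∀ i : Fin (k+1), aH.1 + ∑ t ∈ aH.2, zz k y i t ∈ DD k y (ustar P B) n pc := by
  obtain ⟨a, H, h1, h2, h3⟩ := extraction k y P hidem hmin (bnd n pc) _
    (DD_mem k y P hidem hB n pc)
  exact ⟨(a, H), h1, h2, h3⟩

end Construct


/-- `A ⊆ ℕ` is central: it belongs to some idempotent ultrafilter in the smallest
two-sided ideal `K(βℕ)` (that `p ∈ K(βℕ)` is expressed by: for every `q` there is `r`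
with `r + q + p = p`). -/
def IsCentral (A : Set ℕ+) : Prop :=
  ∃ p : Ultrafilter ℕ+, p = p + p ∧ (∀ q : Ultrafilter ℕ+, ∃ r : Ultrafilter ℕ+, r + q + p = p)
    ∧ A ∈ p

/-- The original Central Sets Theorem (Furstenberg): sums are computed in `ℤ`, and
membership of the (integer) sum in `A ⊆ ℕ` is membership in the image of `A` in `ℤ`. -/
theorem original_central_sets_theorem
    (A : Set ℕ+) (hA : IsCentral A)
    (k : ℕ) (y : ℕ → ℕ → ℤ) :
    ∃ (a : ℕ → ℕ+) (H : ℕ → Finset ℕ),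
      (∀ n, (H n).Nonempty) ∧
      -- (1): max Hₙ < min Hₙ₊₁
      (∀ n, ∀ s ∈ H n, ∀ t ∈ H (n + 1), s < t) ∧
      -- (2): for each i ∈ {1,…,k} and each F ∈ 𝒫_f(ℕ)
      (∀ i ∈ Finset.Icc 1 k, ∀ F : Finset ℕ, F.Nonempty →
        (∑ n ∈ F, ((a n : ℤ) + ∑ t ∈ H n, y i t))
          ∈ (fun m : ℕ+ => (m : ℤ)) '' A) := by
  classical
  obtain ⟨p, hp, hpmin, hpA⟩ := hA
  set P := Ultrafilter.map (fun m : ℕ+ => (m : ℤ)) p with hPdef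
  have hidem : P + P = P := by rw [hPdef, ← umap_add, ← hp]
  have hKZ : ∀ q : Ultrafilter ℤ, ∃ r, r + q + P = P := K_transfer p hp hpmin
  have hA' : (fun m : ℕ+ => (m : ℤ)) '' A ∈ P := by
    rw [hPdef, Ultrafilter.mem_map]
    exact Filter.mem_of_superset hpA (Set.subset_preimage_image _ _)
  set SA := ustar P ((fun m : ℕ+ => (m : ℤ)) '' A) with hSAdef
  have hex : ∀ (n : ℕ) (pc : ℕ → ℤ × Finset ℕ), ∃ aH : ℤ × Finset ℕ,
      aH.2.Nonempty ∧ (∀ t ∈ aH.2, bnd n pc < t) ∧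
      ∀ i : Fin (k+1), aH.1 + ∑ t ∈ aH.2, zz k y i t ∈ DD k y SA n pc :=
    fun n pc => hex_all k y P hidem hKZ hA' n pc
  -- the recursive construction
  set st : ℕ → (ℕ → ℤ × Finset ℕ) :=
    fun n => Nat.rec (fun _ => (0, ∅)) (fun n ih => Function.update ih n (hex n ih).choose) n
    with hst
  set c : ℕ → ℤ × Finset ℕ := fun m => st (m+1) m with hc
  have hstep : ∀ n, st (n+1) = Function.update (st n) n (hex n (st n)).choose := fun _ => rfl
  have hcn : ∀ n, c n = (hex n (st n)).choose := by
    intro n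
    show st (n+1) n = _
    rw [hstep n, Function.update_self]
  have agree : ∀ n m, m < n → st n m = c m := by
    intro n
    induction n with
    | zero => exact fun m hm => absurd hm (Nat.not_lt_zero m)
    | succ n ih =>
      intro m hm
      rcases Nat.lt_succ_iff_lt_or_eq.1 hm with h | h
      · rw [hstep n, Function.update_of_ne (by omega)]
        exact ih m h
      · subst h; rfl
  have h1 : ∀ m, (c m).2.Nonempty := by
    intro m; rw [hcn m]; exact (hex m (st m)).choose_spec.1
  have h2 : ∀ m, ∀ t ∈ (c m).2, bnd m c < t := by
    intro m t ht
    rw [← bnd_congr m (fun m' hm' => agree m m' hm')]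
    have hspec := (hex m (st m)).choose_spec.2.1
    rw [← hcn m] at hspec
    exact hspec t ht
  have h3 : ∀ m (i : Fin (k+1)), vval k y c i m ∈ DD k y SA m c := by
    intro m i
    have hspec := (hex m (st m)).choose_spec.2.2 i
    rw [← hcn m, DD_congr k y SA m (fun m' hm' => agree m m' hm')] at hspec
    exact hspec
  -- main invariant
  have hsum : ∀ N (F : Finset ℕ), F.Nonempty → (∀ m ∈ F, m < N) →
      ∀ i : Fin (k+1), ssum k y c i F ∈ SA := by
    intro N
    induction N with
    | zero =>
      intro F hFne hFlt i
      obtain ⟨m, hm⟩ := hFne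
      exact absurd (hFlt m hm) (Nat.not_lt_zero m)
    | succ N ih =>
      intro F hFne hFlt i
      by_cases hN : N ∈ F
      · have hsplit : ssum k y c i (F.erase N) + vval k y c i N = ssum k y c i F :=
          Finset.sum_erase_add F _ hN
        have hF'lt : ∀ m ∈ F.erase N, m < N := by
          intro m hm
          have h5 := Finset.mem_erase.1 hm
          have h6 := hFlt m h5.2
          omega
        have hDN := h3 N i
        by_cases hF'ne : (F.erase N).Nonempty
        · have hS' : ssum k y c i (F.erase N) ∈ SA := ih (F.erase N) hF'ne hF'lt i
          have hTmem : vval k y c i N ∈ TT k y SA c (F.erase N) i := by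
            have hFp : F.erase N ∈ (Finset.range N).powerset :=
              Finset.mem_powerset.2 fun m hm => Finset.mem_range.2 (hF'lt m hm)
            exact Set.mem_iInter.1 (Set.mem_iInter₂.1 hDN.2 (F.erase N) hFp) i
          unfold TT at hTmem
          rw [if_pos hS'] at hTmem
          rw [← hsplit]
          exact hTmem
        · have hFeq : F = {N} := by
            apply Finset.eq_singleton_iff_unique_mem.2
            refine ⟨hN, fun x hx => ?_⟩
            by_contra hne
            exact hF'ne ⟨x, Finset.mem_erase.2 ⟨hne, hx⟩⟩
          rw [hFeq]
          have hss : ssum k y c i {N} = vval k y c i N := by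
            unfold ssum; rw [Finset.sum_singleton]
          rw [hss]
          exact hDN.1
      · exact ih F hFne (fun m hm => by
          have h6 := hFlt m hm
          have h7 : m ≠ N := fun h => hN (h ▸ hm)
          omega) i
  -- recover positivity of the aₙ
  have haval : ∀ n, ∃ m : ℕ+, ((m : ℤ)) = (c n).1 := by
    intro n
    have hs := hsum (n+1) {n} ⟨n, Finset.mem_singleton_self n⟩
      (fun m hm => by rw [Finset.mem_singleton.1 hm]; omega) 0
    have hval0 : ssum k y c 0 {n} = (c n).1 := by
      unfold ssum vval
      rw [Finset.sum_singleton]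
      have : ∀ t, zz k y 0 t = 0 := by
        intro t; unfold zz; rw [if_pos]; rfl
      simp [this]
    rw [hval0] at hs
    obtain ⟨m, _, hm2⟩ := ustar_subset P _ hs
    exact ⟨m, hm2⟩
  refine ⟨fun n => (haval n).choose, fun n => (c n).2, h1, ?_, ?_⟩
  · intro n s hs t ht
    have hb := h2 (n+1) t ht
    have hle : s ≤ bnd (n+1) c := by
      have hx : (c n).2.sup id ≤ bnd (n+1) c := by
        unfold bnd
        exact Finset.le_sup (f := fun m => (c m).2.sup id) (Finset.mem_range.2 (by omega))
      exact le_trans (Finset.le_sup (f := id) hs) hx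
    omega
  · intro i hi F hFne
    have hik := Finset.mem_Icc.1 hi
    have hilt : i < k + 1 := by omega
    have hs := hsum (F.sup id + 1) F hFne
      (fun m hm => Nat.lt_succ_of_le (Finset.le_sup (f := id) hm)) ⟨i, hilt⟩
    have heq : ssum k y c ⟨i, hilt⟩ F
        = ∑ n ∈ F, (((haval n).choose : ℤ) + ∑ t ∈ (c n).2, y i t) := by
      unfold ssum vval
      apply Finset.sum_congr rfl
      intro m _
      rw [(haval m).choose_spec]
      congr 1
      apply Finset.sum_congr rfl
      intro t _
      unfold zz
      rw [if_neg (by simp; omega)]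
    rw [heq] at hs
    exact ustar_subset P _ hs
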